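/- Let A = k°[t_0,…,t_l]/(t_0⋯t_m − π) with 0 ≠ π ∈ k°, and let a = a_n t^n and a' = a'_{n'} t^{n'} be two special monomials. Then a' ∈ aA if and only if |a_n| ≥ |a'_{n'}|, |a_n π^{n_i}| ≥ |a'_{n'} π^{n'_i}| for 1 ≤ i ≤ m, and n_i ≤ n'_i for i > m. -/

import Mathlib

open scoped NNReal
open MvPolynomial

noncomputable section
set_option maxHeartbeats 1000000
set_option synthInstance.maxHeartbeats 400000

namespace Altered

variable {k : Type*} [Field k]

/-- The defining ideal (t₀⋯t_m - π) of a model semistable scheme. -/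
def modelIdeal (v : Valuation k ℝ≥0) (l m : ℕ) (π : v.integer) :
    Ideal (MvPolynomial (Fin (l + 1)) v.integer) :=
  Ideal.span
    {(∏ i ∈ Finset.univ.filter (fun i : Fin (l + 1) => (i : ℕ) ≤ m), X i) - C π}

/-- The coordinate ring A = k°[t₀,…,t_l]/(t₀⋯t_m − π) of a model semistable scheme. -/
abbrev ModelRing (v : Valuation k ℝ≥0) (l m : ℕ) (π : v.integer) :=
  MvPolynomial (Fin (l + 1)) v.integer ⧸ modelIdeal v l m π

variable (v : Valuation k ℝ≥0) (l m : ℕ) (π : v.integer)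

/-- An exponent tuple n ∈ ℤ^m × ℕ^(l-m): index j : Fin l stands for the variable
t_{j+1}, and exponents of t_{j+1} for j ≥ m must be nonnegative. -/
def IsSpecialIndex (n : Fin l → ℤ) : Prop := ∀ j : Fin l, m ≤ (j : ℕ) → 0 ≤ n j

/-- D(n) = −min(0, n₁,…,n_m). -/
def negDeg (n : Fin l → ℤ) : ℕ :=
  (Finset.univ.filter (fun j : Fin l => (j : ℕ) < m)).sup fun j => (-n j).toNat

/-- The special monomial a_n t^n with coefficient a_n = b·π^{D(n)}
(so that the bound |a_n| ≤ |π|^{−min(0,n₁,…,n_m)} holds automatically),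
written as an honest element of A: b·π^{D}·t^n = b·t₀^D·∏_{1≤i≤m} t_i^{n_i+D}·∏_{i>m} t_i^{n_i}. -/
def specialMonomial (b : v.integer) (n : Fin l → ℤ) : ModelRing v l m π :=
  Ideal.Quotient.mk (modelIdeal v l m π)
    (C b * X (0 : Fin (l + 1)) ^ negDeg l m n *
      ∏ j : Fin l, X j.succ ^
        (if (j : ℕ) < m then (n j + negDeg l m n).toNat else (n j).toNat))

/-- The set Δ of monomial semivaluation parameters:
r ∈ [0,1]^{l+1} with r₀⋯r_m = |π|. -/
def Delta : Set (Fin (l + 1) → ℝ≥0) :=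
  {r | (∀ i, r i ≤ 1) ∧
    ∏ i ∈ Finset.univ.filter (fun i : Fin (l + 1) => (i : ℕ) ≤ m), r i = v (π : k)}

/-- The value |a_n t^n|_r = |a_n|·r^n of the special monomial with coefficient
a_n = b·π^{D(n)} at r ∈ Δ.  (On Δ, r_i ≠ 0 whenever a negative exponent occurs.) -/
def monValue (b : v.integer) (n : Fin l → ℤ) (r : Fin (l + 1) → ℝ≥0) : ℝ≥0 :=
  v (b : k) * v (π : k) ^ (negDeg l m n : ℤ) * ∏ j : Fin l, r j.succ ^ (n j)

end Altered

namespace Altered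

/-!
STATEMENT 5: for special monomials a = a_n t^n and a' = a'_{n'} t^{n'} in
A = k°[t₀,…,t_l]/(t₀⋯t_m − π) (with coefficients a_n = b·π^{D(n)},
a'_{n'} = b'·π^{D(n')}), one has a' ∈ aA iff |a_n| ≥ |a'_{n'}|,
|a_n π^{n_i}| ≥ |a'_{n'} π^{n'_i}| for 1 ≤ i ≤ m, and n_i ≤ n'_i for i > m.
-/

-- ==== auxiliary development ====
section Aux
variable {k : Type*} [Field k]
variable (v : Valuation k ℝ≥0) (l m : ℕ) (π : v.integer)

lemma neg_le_negDeg (n : Fin l → ℤ) {j : Fin l} (hj : (j : ℕ) < m) :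
    -n j ≤ (negDeg l m n : ℤ) := by
  have h1 : (-n j).toNat ≤ negDeg l m n := by
    rw [negDeg]
    exact Finset.le_sup (f := fun j => (-n j).toNat) (by simp [Finset.mem_filter, hj])
  calc -n j ≤ ((-n j).toNat : ℤ) := Int.self_le_toNat _
    _ ≤ _ := by exact_mod_cast h1

variable {l} in
def smon (s : Fin l → ℝ≥0) (e : Fin l → ℤ) : ℝ≥0 := ∏ j, s j ^ (e j)

variable {l} in
lemma smon_add {s : Fin l → ℝ≥0} (hs : ∀ j, s j ≠ 0) (d e : Fin l → ℤ) :
    smon s (d + e) = smon s d * smon s e := by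
  simp only [smon, ← Finset.prod_mul_distrib]
  exact Finset.prod_congr rfl fun j _ => by
    rw [Pi.add_apply, zpow_add₀ (hs j)]

variable {l} in
def wval (s : Fin l → ℝ≥0) (f : AddMonoidAlgebra k (Fin l → ℤ)) : ℝ≥0 :=
  (Finsupp.support f.coeff).sup fun e => v (f.coeff e) * smon s e

variable {l} in
lemma le_wval (s : Fin l → ℝ≥0) (f : AddMonoidAlgebra k (Fin l → ℤ)) (e : Fin l → ℤ) :
    v (f.coeff e) * smon s e ≤ wval v s f := by
  rw [wval]
  by_cases h : e ∈ Finsupp.support f.coeff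
  · exact Finset.le_sup (f := fun e => v (f.coeff e) * smon s e) h
  · rw [Finsupp.notMem_support_iff.mp h]
    simp

variable {l} in
lemma wval_single (s : Fin l → ℝ≥0) (e : Fin l → ℤ) (a : k) :
    wval v s (AddMonoidAlgebra.single e a) = v a * smon s e := by
  by_cases h : a = 0
  · simp [h, wval]
  · rw [wval]
    rw [AddMonoidAlgebra.coeff_single, Finsupp.support_single_ne_zero _ h, Finset.sup_singleton, Finsupp.single_eq_same]

variable {l} in
lemma wval_add_le (s : Fin l → ℝ≥0) (f g : AddMonoidAlgebra k (Fin l → ℤ)) :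
    wval v s (f + g) ≤ max (wval v s f) (wval v s g) := by
  refine Finset.sup_le fun e he => ?_
  calc v ((f + g).coeff e) * smon s e ≤ max (v (f.coeff e)) (v (g.coeff e)) * smon s e := by
        rw [AddMonoidAlgebra.coeff_add, Finsupp.add_apply]
        exact mul_le_mul_left (v.map_add _ _) _
    _ = max (v (f.coeff e) * smon s e) (v (g.coeff e) * smon s e) := by
        rw [max_mul_of_nonneg _ _ zero_le]
    _ ≤ max (wval v s f) (wval v s g) :=
        max_le_max (le_wval v s f e) (le_wval v s g e)

variable {l} in
lemma wval_single_mul_le {s : Fin l → ℝ≥0} (hs : ∀ j, s j ≠ 0) (d : Fin l → ℤ) (a : k)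
    (f : AddMonoidAlgebra k (Fin l → ℤ)) :
    wval v s (AddMonoidAlgebra.single d a * f) ≤ (v a * smon s d) * wval v s f := by
  refine Finset.sup_le fun e he => ?_
  rw [AddMonoidAlgebra.coeff_single_mul_apply, v.map_mul]
  have h2 : smon s e = smon s d * smon s (-d + e) := by
    rw [← smon_add hs]; congr 1; abel
  rw [h2]
  calc v a * v (f.coeff (-d + e)) * (smon s d * smon s (-d + e))
      = (v a * smon s d) * (v (f.coeff (-d + e)) * smon s (-d + e)) := by ring
    _ ≤ (v a * smon s d) * wval v s f := mul_le_mul_right (le_wval v s f _) _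

def chiExp : Fin l → ℤ := ∑ j ∈ Finset.univ.filter (fun j : Fin l => (j : ℕ) < m), Pi.single j 1

lemma chiExp_apply (j : Fin l) : chiExp l m j = if (j : ℕ) < m then 1 else 0 := by
  classical
  rw [chiExp, Finset.sum_apply]
  simp [Pi.single_apply, Finset.sum_ite_eq']

def uvar : Fin (l + 1) → AddMonoidAlgebra k (Fin l → ℤ) :=
  Fin.cases (AddMonoidAlgebra.single (-(chiExp l m)) (π : k))
    (fun j => AddMonoidAlgebra.single (Pi.single j 1) 1)

def phiHom : MvPolynomial (Fin (l + 1)) v.integer →+* AddMonoidAlgebra k (Fin l → ℤ) :=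
  MvPolynomial.eval₂Hom (AddMonoidAlgebra.singleZeroRingHom.comp (algebraMap v.integer k))
    (uvar v l m π)

lemma phiHom_C (a : v.integer) :
    phiHom v l m π (C a) = AddMonoidAlgebra.single 0 (a : k) := by
  simp [phiHom, AddMonoidAlgebra.singleZeroRingHom]
  rfl

lemma phiHom_X0 : phiHom v l m π (X 0) = AddMonoidAlgebra.single (-(chiExp l m)) (π : k) := by
  simp [phiHom, uvar]

lemma phiHom_Xsucc (j : Fin l) :
    phiHom v l m π (X j.succ) = AddMonoidAlgebra.single (Pi.single j 1) 1 := by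
  simp [phiHom, uvar]

lemma prod_le_m_split {M : Type*} [CommMonoid M] (g : Fin (l + 1) → M) :
    ∏ i ∈ Finset.univ.filter (fun i : Fin (l + 1) => (i : ℕ) ≤ m), g i
      = g 0 * ∏ j ∈ Finset.univ.filter (fun j : Fin l => (j : ℕ) < m), g j.succ := by
  rw [Finset.prod_filter, Finset.prod_filter, Fin.prod_univ_succ]
  simp only [Fin.val_zero, Nat.zero_le, if_true]
  congr 1

lemma phiHom_rel :
    phiHom v l m π ((∏ i ∈ Finset.univ.filter (fun i : Fin (l + 1) => (i : ℕ) ≤ m), X i) - C π)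
      = 0 := by
  classical
  rw [map_sub, map_prod, phiHom_C]
  rw [prod_le_m_split]
  rw [phiHom_X0]
  have h1 : (∏ j ∈ Finset.univ.filter (fun j : Fin l => (j : ℕ) < m), phiHom v l m π (X j.succ))
      = ∏ j ∈ Finset.univ.filter (fun j : Fin l => (j : ℕ) < m),
          AddMonoidAlgebra.single (Pi.single j (1:ℤ)) (1:k) :=
    Finset.prod_congr rfl fun j _ => phiHom_Xsucc v l m π j
  rw [h1, AddMonoidAlgebra.prod_single, AddMonoidAlgebra.single_mul_single]
  rw [Finset.prod_const_one]
  rw [show -(chiExp l m) + ∑ j ∈ Finset.univ.filter (fun j : Fin l => (j : ℕ) < m),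
        Pi.single j (1:ℤ) = 0 by rw [← chiExp]; abel]
  rw [mul_one, sub_self]

/-- the polynomial underlying `specialMonomial` -/
def specialPoly (b : v.integer) (n : Fin l → ℤ) : MvPolynomial (Fin (l + 1)) v.integer :=
  C b * X (0 : Fin (l + 1)) ^ negDeg l m n *
      ∏ j : Fin l, X j.succ ^
        (if (j : ℕ) < m then (n j + negDeg l m n).toNat else (n j).toNat)

lemma phiHom_specialPoly (b : v.integer) (n : Fin l → ℤ) (hn : IsSpecialIndex l m n) :
    phiHom v l m π (specialPoly v l m b n)
      = AddMonoidAlgebra.single n ((b : k) * (π : k) ^ negDeg l m n) := by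
  classical
  rw [specialPoly, map_mul, map_mul, map_pow, map_prod, phiHom_C, phiHom_X0]
  have h1 : ∀ j : Fin l, j ∈ (Finset.univ : Finset (Fin l)) →
      phiHom v l m π (X j.succ ^ (if (j : ℕ) < m then (n j + negDeg l m n).toNat else (n j).toNat))
        = AddMonoidAlgebra.single
            ((fun j : Fin l => (((if (j : ℕ) < m then (n j + negDeg l m n).toNat else (n j).toNat) : ℕ)
              • Pi.single j (1:ℤ) : Fin l → ℤ)) j)
            ((fun _ : Fin l => (1:k)) j) := by
    intro j _
    rw [map_pow, phiHom_Xsucc, AddMonoidAlgebra.single_pow, one_pow]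
  rw [Finset.prod_congr rfl h1, AddMonoidAlgebra.prod_single, AddMonoidAlgebra.single_pow,
    AddMonoidAlgebra.single_mul_single, AddMonoidAlgebra.single_mul_single]
  rw [Finset.prod_const_one, mul_one]
  congr 1
  funext j'
  simp only [Pi.add_apply, Pi.zero_apply, Pi.smul_apply, Finset.sum_apply, Pi.neg_apply,
    smul_ite_zero, smul_neg, nsmul_eq_mul, Pi.mul_apply, Pi.natCast_apply,
    chiExp_apply, Pi.single_apply, mul_one, mul_ite,
    mul_zero, zero_add, Finset.sum_ite_eq, Finset.mem_univ, if_true]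
  by_cases hj : (j' : ℕ) < m
  · rw [if_pos hj, if_pos hj]
    have : 0 ≤ n j' + negDeg l m n := by
      have := neg_le_negDeg l m n hj; omega
    rw [Int.toNat_of_nonneg this]; push_cast; ring
  · rw [if_neg hj, if_neg hj]
    have : 0 ≤ n j' := hn j' (le_of_not_gt hj)
    rw [Int.toNat_of_nonneg this]; ring

lemma wval_phiHom_le_one {s : Fin l → ℝ≥0} (hs0 : ∀ j, s j ≠ 0) (hs1 : ∀ j, s j ≤ 1)
    (hsπ : v (π : k) ≤ ∏ j ∈ Finset.univ.filter (fun j : Fin l => (j : ℕ) < m), s j)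
    (Q : MvPolynomial (Fin (l + 1)) v.integer) :
    wval v s (phiHom v l m π Q) ≤ 1 := by
  classical
  induction Q using MvPolynomial.induction_on with
  | C a =>
      rw [phiHom_C, wval_single]
      have h0 : smon s (0 : Fin l → ℤ) = 1 := by simp [smon]
      rw [h0, mul_one]
      exact (v.mem_integer_iff _).mp a.2
  | add p q hp hq =>
      rw [map_add]
      exact le_trans (wval_add_le v s _ _) (max_le hp hq)
  | mul_X p i hp =>
      rw [map_mul, mul_comm]
      induction i using Fin.cases with
      | zero =>
          rw [phiHom_X0]
          refine le_trans (wval_single_mul_le v hs0 _ _ _) ?_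
          have hP : (∏ j ∈ Finset.univ.filter (fun j : Fin l => (j : ℕ) < m), s j) ≠ 0 :=
            Finset.prod_ne_zero_iff.mpr fun j _ => hs0 j
          have hsm : smon s (-(chiExp l m))
              = (∏ j ∈ Finset.univ.filter (fun j : Fin l => (j : ℕ) < m), s j)⁻¹ := by
            rw [smon]
            have h1 : ∀ j : Fin l, s j ^ ((-(chiExp l m)) j)
                = if (j : ℕ) < m then (s j)⁻¹ else 1 := fun j => by
              rw [Pi.neg_apply, chiExp_apply]; split_ifs <;> simp
            rw [Finset.prod_congr rfl fun j _ => h1 j, ← Finset.prod_filter,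
              ← Finset.prod_inv_distrib]
          have hb : v (π : k) * smon s (-(chiExp l m)) ≤ 1 := by
            rw [hsm]
            calc v (π : k) * (∏ j ∈ Finset.univ.filter (fun j : Fin l => (j : ℕ) < m), s j)⁻¹
                ≤ (∏ j ∈ Finset.univ.filter (fun j : Fin l => (j : ℕ) < m), s j) *
                  (∏ j ∈ Finset.univ.filter (fun j : Fin l => (j : ℕ) < m), s j)⁻¹ :=
                  mul_le_mul_left hsπ _
              _ = 1 := mul_inv_cancel₀ hP
          exact mul_le_one' hb hp
      | succ j =>
          rw [phiHom_Xsucc]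
          refine le_trans (wval_single_mul_le v hs0 _ _ _) ?_
          have hsm : smon s (Pi.single j (1:ℤ)) = s j := by
            rw [smon]
            rw [Finset.prod_eq_single j
              (fun j' _ hne => by rw [Pi.single_eq_of_ne hne]; exact zpow_zero _)
              (fun h => absurd (Finset.mem_univ j) h)]
            rw [Pi.single_eq_same, zpow_one]
          refine mul_le_one' ?_ hp
          rw [map_one, one_mul, hsm]
          exact hs1 j

lemma forward_ineq (b b' : v.integer) (n n' : Fin l → ℤ)
    (hn : IsSpecialIndex l m n) (hn' : IsSpecialIndex l m n')
    (h : Ideal.Quotient.mk (modelIdeal v l m π) (specialPoly v l m b' n')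
          ∈ Ideal.span {Ideal.Quotient.mk (modelIdeal v l m π) (specialPoly v l m b n)})
    {s : Fin l → ℝ≥0} (hs0 : ∀ j, s j ≠ 0) (hs1 : ∀ j, s j ≤ 1)
    (hsπ : v (π : k) ≤ ∏ j ∈ Finset.univ.filter (fun j : Fin l => (j : ℕ) < m), s j) :
    v ((b' : k) * (π : k) ^ negDeg l m n') * smon s n'
      ≤ v ((b : k) * (π : k) ^ negDeg l m n) * smon s n := by
  obtain ⟨c, hc⟩ := (Ideal.mem_span_singleton (α := MvPolynomial (Fin (l+1)) v.integer ⧸ modelIdeal v l m π)).mp h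
  obtain ⟨Q, rfl⟩ := Ideal.Quotient.mk_surjective c
  rw [← map_mul] at hc
  have hmem := (Ideal.Quotient.eq).mp hc
  rw [modelIdeal] at hmem
  obtain ⟨g, hg⟩ := Ideal.mem_span_singleton.mp hmem
  have hphi : phiHom v l m π (specialPoly v l m b' n')
      = phiHom v l m π (specialPoly v l m b n) * phiHom v l m π Q := by
    have h2 := congrArg (phiHom v l m π) hg
    rw [map_sub, map_mul, map_mul, phiHom_rel, zero_mul, sub_eq_zero] at h2
    rw [h2]
  have h1 := congrArg (wval v s) hphi
  rw [phiHom_specialPoly v l m π b' n' hn', phiHom_specialPoly v l m π b n hn,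
    wval_single] at h1
  rw [h1]
  calc wval v s (AddMonoidAlgebra.single n ((b:k) * (π:k) ^ negDeg l m n) * phiHom v l m π Q)
      ≤ (v ((b:k) * (π:k) ^ negDeg l m n) * smon s n) * wval v s (phiHom v l m π Q) :=
        wval_single_mul_le v hs0 _ _ _
    _ ≤ (v ((b:k) * (π:k) ^ negDeg l m n) * smon s n) * 1 :=
        mul_le_mul_right (wval_phiHom_le_one v l m π hs0 hs1 hsπ Q) _
    _ = _ := mul_one _

lemma backward (b b' : v.integer) (hb : b ≠ 0) (hπ : π ≠ 0)
    (n n' : Fin l → ℤ) (hn : IsSpecialIndex l m n) (hn' : IsSpecialIndex l m n')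
    (h1 : v (b' : k) * v (π : k) ^ ((negDeg l m n' : ℕ) : ℤ)
        ≤ v (b : k) * v (π : k) ^ ((negDeg l m n : ℕ) : ℤ))
    (h2 : ∀ j : Fin l, (j : ℕ) < m →
        v (b' : k) * v (π : k) ^ ((negDeg l m n' : ℕ) : ℤ) * v (π : k) ^ (n' j) ≤
          v (b : k) * v (π : k) ^ ((negDeg l m n : ℕ) : ℤ) * v (π : k) ^ (n j))
    (h3 : ∀ j : Fin l, m ≤ (j : ℕ) → n j ≤ n' j) :
    Ideal.Quotient.mk (modelIdeal v l m π) (specialPoly v l m b' n')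
      ∈ Ideal.span {Ideal.Quotient.mk (modelIdeal v l m π) (specialPoly v l m b n)} := by
  classical
  set D := negDeg l m n with hD
  set D' := negDeg l m n' with hD'
  set Pv := v (π : k) with hPvdef
  have hπk : (π : k) ≠ 0 := fun hc => hπ (Subtype.ext hc)
  have hbk : (b : k) ≠ 0 := fun hc => hb (Subtype.ext hc)
  have hPv : Pv ≠ 0 := v.ne_zero_iff.mpr hπk
  have hPv1 : Pv ≤ 1 := (v.mem_integer_iff _).mp π.2
  -- the exponent shift
  set μ : ℕ := max ((D : ℤ) - D').toNat
      ((Finset.univ.filter (fun j : Fin l => (j : ℕ) < m)).sup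
        fun j => (n j + D - n' j - D').toNat) with hμdef
  have hμ1 : (D : ℤ) - D' ≤ μ := by
    calc (D : ℤ) - D' ≤ (((D : ℤ) - D').toNat : ℤ) := Int.self_le_toNat _
      _ ≤ μ := Int.ofNat_le.mpr (le_max_left _ _)
  have hμ2 : ∀ j : Fin l, (j : ℕ) < m → n j + D - n' j - D' ≤ μ := by
    intro j hj
    have hs : (n j + D - n' j - D').toNat ≤ μ := by
      refine le_trans ?_ (le_max_right _ _)
      exact Finset.le_sup (f := fun j => (n j + D - n' j - D').toNat)
        (by simp [Finset.mem_filter, hj])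
    calc n j + D - n' j - D' ≤ ((n j + D - n' j - D').toNat : ℤ) := Int.self_le_toNat _
      _ ≤ μ := Int.ofNat_le.mpr hs
  -- cancellation helper
  have hcancel : ∀ (x y : ℝ≥0) (e f : ℤ), x * Pv ^ e ≤ y * Pv ^ f → x ≤ y * Pv ^ (f - e) := by
    intro x y e f hxy
    have h := mul_le_mul_left hxy (Pv ^ (-e))
    rwa [mul_assoc, mul_assoc, ← zpow_add₀ hPv, ← zpow_add₀ hPv, add_neg_cancel, zpow_zero,
      mul_one, ← sub_eq_add_neg] at h
  have hmono : ∀ e f : ℤ, e ≤ f → Pv ^ f ≤ Pv ^ e := fun e f hef =>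
    zpow_le_zpow_right_of_le_one₀ (zero_lt_iff.mpr hPv) hPv1 hef
  -- the coefficient bound
  have hcoef : v (b' : k) ≤ v (b : k) * Pv ^ ((μ : ℕ) : ℤ) := by
    -- helper for the μ = 0 case
    have hzero : (∀ j : Fin l, (j : ℕ) < m → n j + D - n' j - D' ≤ 0) → (D : ℤ) ≤ D' →
        v (b' : k) ≤ v (b : k) := by
      intro hall hDD
      by_cases hD'0 : D' = 0
      · have hD0 : D = 0 := by omega
        have := h1
        rw [hD'0, hD0] at this
        simpa using this
      · -- D' is attained at some j*
        have hne : (Finset.univ.filter (fun j : Fin l => (j : ℕ) < m)).Nonempty := by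
          by_contra hcon
          rw [Finset.not_nonempty_iff_eq_empty] at hcon
          apply hD'0
          rw [hD', negDeg, hcon, Finset.sup_empty]
          rfl
        obtain ⟨js, hjs, hjsup⟩ := Finset.exists_mem_eq_sup _ hne
          (fun j : Fin l => (-n' j).toNat)
        have hjsm : (js : ℕ) < m := (Finset.mem_filter.mp hjs).2
        have hjval : -n' js = (D' : ℤ) := by
          have h4 : (D' : ℕ) = (-n' js).toNat := by rw [hD', negDeg]; exact hjsup
          have h5 : 0 < (D' : ℕ) := Nat.pos_of_ne_zero hD'0
          omega
        have hnj : n js + D = 0 := by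
          have ha := hall js hjsm
          have hbnd := neg_le_negDeg l m n hjsm
          omega
        have := h2 js hjsm
        rw [mul_assoc, mul_assoc, ← zpow_add₀ hPv, ← zpow_add₀ hPv] at this
        rw [show ((D' : ℕ) : ℤ) + n' js = 0 by omega, show ((D : ℕ) : ℤ) + n js = 0 by omega,
          zpow_zero, mul_one, mul_one] at this
        exact this
    rcases max_choice ((D : ℤ) - D').toNat
        ((Finset.univ.filter (fun j : Fin l => (j : ℕ) < m)).sup
          fun j => (n j + D - n' j - D').toNat) with hc | hc
    · -- μ = ((D : ℤ) - D').toNat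
      by_cases hDD : (D' : ℤ) ≤ D
      · have hμeq : ((μ : ℕ) : ℤ) = (D : ℤ) - D' := by rw [hμdef, hc]; omega
        rw [hμeq]
        exact hcancel _ _ _ _ h1
      · have hμ0 : μ = 0 := by rw [hμdef, hc]; omega
        have hall : ∀ j : Fin l, (j : ℕ) < m → n j + D - n' j - D' ≤ 0 := by
          intro j hj
          have := hμ2 j hj
          omega
        rw [hμ0]
        simpa using hzero hall (by omega)
    · -- μ = sup
      by_cases hs0 : μ = 0
      · have hall : ∀ j : Fin l, (j : ℕ) < m → n j + D - n' j - D' ≤ 0 := by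
          intro j hj
          have := hμ2 j hj
          omega
        rw [hs0]
        simpa using hzero hall (by omega)
      · -- sup positive, attained
        have hne : (Finset.univ.filter (fun j : Fin l => (j : ℕ) < m)).Nonempty := by
          by_contra hcon
          rw [Finset.not_nonempty_iff_eq_empty] at hcon
          apply hs0
          rw [hμdef, hc, hcon, Finset.sup_empty]
          rfl
        obtain ⟨j0, hj0, hj0sup⟩ := Finset.exists_mem_eq_sup _ hne
          (fun j : Fin l => (n j + D - n' j - D').toNat)
        have hj0m : (j0 : ℕ) < m := (Finset.mem_filter.mp hj0).2
        have hμeq : ((μ : ℕ) : ℤ) = n j0 + D - n' j0 - D' := by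
          have h4 : μ = (n j0 + D - n' j0 - D').toNat := by rw [hμdef, hc]; exact hj0sup
          have h5 : 0 < μ := Nat.pos_of_ne_zero hs0
          omega
        have := h2 j0 hj0m
        rw [mul_assoc, mul_assoc, ← zpow_add₀ hPv, ← zpow_add₀ hPv] at this
        have h6 := hcancel _ _ _ _ this
        rw [hμeq]
        rw [show ((D : ℕ) : ℤ) + n j0 - (((D' : ℕ) : ℤ) + n' j0) = n j0 + D - n' j0 - D' by ring]
          at h6
        exact h6
  -- the quotient coefficient
  set c₀ : k := (b' : k) / ((b : k) * (π : k) ^ μ) with hc₀def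
  have hc₀mem : c₀ ∈ v.integer := by
    rw [Valuation.mem_integer_iff, hc₀def, map_div₀, map_mul, map_pow]
    refine div_le_one_of_le₀ ?_ zero_le
    rw [← hPvdef]
    rw [show Pv ^ μ = Pv ^ ((μ : ℕ) : ℤ) from (zpow_natCast _ _).symm]
    exact hcoef
  set cQ : v.integer := ⟨c₀, hc₀mem⟩ with hcQdef
  have hbc : b * cQ * π ^ μ = b' := by
    apply Subtype.ext
    push_cast
    show (b : k) * c₀ * (π : k) ^ μ = b'
    rw [hc₀def]
    have hne : (b : k) * (π : k) ^ μ ≠ 0 := mul_ne_zero hbk (pow_ne_zero _ hπk)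
    field_simp
  -- exponents of the cofactor
  set α₀ : ℕ := ((D' : ℤ) + μ - D).toNat with hα₀def
  set αf : Fin l → ℕ := fun j => if (j : ℕ) < m then (n' j + D' + μ - n j - D).toNat
      else (n' j - n j).toNat with hαfdef
  set Q : MvPolynomial (Fin (l + 1)) v.integer :=
    C cQ * X (0 : Fin (l + 1)) ^ α₀ * ∏ j : Fin l, X j.succ ^ αf j with hQdef
  -- exponent identities
  have hα₀eq : D + α₀ = D' + μ := by
    rw [hα₀def]
    omega
  have hαfeq : ∀ j : Fin l,
      (if (j : ℕ) < m then (n j + D).toNat else (n j).toNat) + αf j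
        = (if (j : ℕ) < m then (n' j + D').toNat else (n' j).toNat)
          + (if (j : ℕ) < m then μ else 0) := by
    intro j
    rw [hαfdef]
    by_cases hj : (j : ℕ) < m
    · simp only [if_pos hj]
      have hb1 := neg_le_negDeg l m n hj
      have hb2 := neg_le_negDeg l m n' hj
      have hb3 := hμ2 j hj
      rw [← hD, ← hD'] at *
      omega
    · simp only [if_neg hj]
      have hb1 := hn j (le_of_not_gt hj)
      have hb2 := h3 j (le_of_not_gt hj)
      omega
  -- the polynomial identity
  have e1 : specialPoly v l m b n * Q
      = C (b * cQ) * X (0 : Fin (l + 1)) ^ (D' + μ)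
        * ∏ j : Fin l, X j.succ ^
            ((if (j : ℕ) < m then (n' j + D').toNat else (n' j).toNat)
              + (if (j : ℕ) < m then μ else 0)) := by
    rw [specialPoly, hQdef, ← hD]
    rw [show (C b * X (0 : Fin (l + 1)) ^ D
          * ∏ j : Fin l, X j.succ ^ (if (j : ℕ) < m then (n j + D).toNat else (n j).toNat))
        * (C cQ * X (0 : Fin (l + 1)) ^ α₀ * ∏ j : Fin l, X j.succ ^ αf j)
        = (C b * C cQ) * (X (0 : Fin (l + 1)) ^ D * X (0 : Fin (l + 1)) ^ α₀)
          * ((∏ j : Fin l, X j.succ ^ (if (j : ℕ) < m then (n j + D).toNat else (n j).toNat))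
            * ∏ j : Fin l, X j.succ ^ αf j) from by ring]
    rw [← C_mul, ← pow_add, ← Finset.prod_mul_distrib, hα₀eq]
    congr 1
    exact Finset.prod_congr rfl fun j _ => by rw [← pow_add, hαfeq j]
  have e2 : C (b * cQ) * X (0 : Fin (l + 1)) ^ (D' + μ)
        * ∏ j : Fin l, X j.succ ^
            ((if (j : ℕ) < m then (n' j + D').toNat else (n' j).toNat)
              + (if (j : ℕ) < m then μ else 0))
      = (C (b * cQ) * X (0 : Fin (l + 1)) ^ D'
          * ∏ j : Fin l, X j.succ ^ (if (j : ℕ) < m then (n' j + D').toNat else (n' j).toNat))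
        * ((∏ i ∈ Finset.univ.filter (fun i : Fin (l + 1) => (i : ℕ) ≤ m), X i) ^ μ)
        := by
    rw [prod_le_m_split]
    rw [mul_pow, pow_add]
    have hsplit : (∏ j : Fin l, X (R := v.integer) j.succ ^
            ((if (j : ℕ) < m then (n' j + D').toNat else (n' j).toNat)
              + (if (j : ℕ) < m then μ else 0)))
        = (∏ j : Fin l, X j.succ ^ (if (j : ℕ) < m then (n' j + D').toNat else (n' j).toNat))
          * ∏ j : Fin l, X j.succ ^ (if (j : ℕ) < m then μ else 0) := by
      rw [← Finset.prod_mul_distrib]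
      exact Finset.prod_congr rfl fun j _ => pow_add _ _ _
    rw [hsplit]
    have hμprod : (∏ j : Fin l, X (R := v.integer) j.succ ^ (if (j : ℕ) < m then μ else 0))
        = (∏ j ∈ Finset.univ.filter (fun j : Fin l => (j : ℕ) < m), X j.succ) ^ μ := by
      rw [← Finset.prod_pow, Finset.prod_filter]
      exact Finset.prod_congr rfl fun j _ => by split_ifs <;> simp
    rw [hμprod]
    ring
  -- now pass to the quotient
  refine (Ideal.mem_span_singleton (α := MvPolynomial (Fin (l+1)) v.integer ⧸ modelIdeal v l m π)).mpr ⟨Ideal.Quotient.mk (modelIdeal v l m π) Q, ?_⟩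
  rw [← map_mul, e1, e2]
  have hrel : Ideal.Quotient.mk (modelIdeal v l m π)
        (∏ i ∈ Finset.univ.filter (fun i : Fin (l + 1) => (i : ℕ) ≤ m), X i)
      = Ideal.Quotient.mk (modelIdeal v l m π) (C π) := by
    rw [Ideal.Quotient.eq]
    exact Ideal.subset_span rfl
  rw [map_mul, map_pow, hrel, ← map_pow, ← map_mul, ← C_pow, specialPoly, ← hD']
  refine congrArg (Ideal.Quotient.mk (modelIdeal v l m π)) ?_
  rw [show (C (b * cQ) * X (0 : Fin (l + 1)) ^ D'
        * ∏ j : Fin l, X j.succ ^ (if (j : ℕ) < m then (n' j + D').toNat else (n' j).toNat))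
        * C (π ^ μ)
      = C (b * cQ * π ^ μ) * X (0 : Fin (l + 1)) ^ D'
        * ∏ j : Fin l, X j.succ ^ (if (j : ℕ) < m then (n' j + D').toNat else (n' j).toNat) from by
    simp only [C_mul]; ring]
  rw [hbc]

end Aux

theorem specialMonomial_dvd_iff
    {k : Type*} [Field k] (v : Valuation k ℝ≥0)
    (hv : ∃ x : k, v x ≠ 0 ∧ v x ≠ 1)
    (l m : ℕ) (hm : m ≤ l) (π : v.integer) (hπ : π ≠ 0)
    (b b' : v.integer) (hb : b ≠ 0) (hb' : b' ≠ 0)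
    (n n' : Fin l → ℤ) (hn : IsSpecialIndex l m n) (hn' : IsSpecialIndex l m n') :
    specialMonomial v l m π b' n' ∈ Ideal.span {specialMonomial v l m π b n} ↔
      (v (b' : k) * v (π : k) ^ (negDeg l m n' : ℤ) ≤
        v (b : k) * v (π : k) ^ (negDeg l m n : ℤ)) ∧
      (∀ j : Fin l, (j : ℕ) < m →
        v (b' : k) * v (π : k) ^ (negDeg l m n' : ℤ) * v (π : k) ^ (n' j) ≤
          v (b : k) * v (π : k) ^ (negDeg l m n : ℤ) * v (π : k) ^ (n j)) ∧
      (∀ j : Fin l, m ≤ (j : ℕ) → n j ≤ n' j) := by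
  classical
  have hsm : ∀ (c : v.integer) (e : Fin l → ℤ), specialMonomial v l m π c e
      = Ideal.Quotient.mk (modelIdeal v l m π) (specialPoly v l m c e) := fun _ _ => rfl
  have hπk : (π : k) ≠ 0 := fun hc => hπ (Subtype.ext hc)
  have hbk : (b : k) ≠ 0 := fun hc => hb (Subtype.ext hc)
  have hb'k : (b' : k) ≠ 0 := fun hc => hb' (Subtype.ext hc)
  have hPv : v (π : k) ≠ 0 := v.ne_zero_iff.mpr hπk
  have hPv1 : v (π : k) ≤ 1 := (v.mem_integer_iff _).mp π.2
  have hval : ∀ (x : v.integer) (N : ℕ),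
      v ((x : k) * (π : k) ^ N) = v (x : k) * v (π : k) ^ ((N : ℕ) : ℤ) :=
    fun x N => by rw [map_mul, map_pow, ← zpow_natCast]
  constructor
  · intro h
    rw [hsm, hsm] at h
    refine ⟨?_, ?_, ?_⟩
    · have h0 := forward_ineq v l m π b b' n n' hn hn' h (s := fun _ => (1 : ℝ≥0))
        (fun _ => one_ne_zero) (fun _ => le_refl 1) (by simpa using hPv1)
      rw [hval, hval] at h0
      simpa [smon] using h0
    · intro j hj
      set s : Fin l → ℝ≥0 := fun j' => if j' = j then v (π : k) else 1 with hsdef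
      have hprod : (∏ j' ∈ Finset.univ.filter (fun j' : Fin l => (j' : ℕ) < m), s j')
          = v (π : k) := by
        rw [hsdef]
        rw [Finset.prod_ite_eq' (Finset.univ.filter (fun j' : Fin l => (j' : ℕ) < m)) j
          (fun _ => v (π : k))]
        simp [Finset.mem_filter, hj]
      have hsm2 : ∀ e : Fin l → ℤ, smon s e = v (π : k) ^ (e j) := by
        intro e
        rw [hsdef, smon]
        rw [Finset.prod_congr rfl (fun j' _ =>
          show (if j' = j then v (π : k) else 1) ^ (e j')
              = if j' = j then v (π : k) ^ (e j') else 1 from by split_ifs <;> simp)]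
        rw [Finset.prod_ite_eq' Finset.univ j (fun j' => v (π : k) ^ (e j'))]
        simp
      have h0 := forward_ineq v l m π b b' n n' hn hn' h (s := s)
        (fun j' => by simp only [hsdef]; split_ifs <;> simp [hPv])
        (fun j' => by simp only [hsdef]; split_ifs <;> simp [hPv1])
        (le_of_eq hprod.symm)
      rw [hval, hval, hsm2, hsm2] at h0
      exact h0
    · intro j hj
      by_contra hlt
      push_neg at hlt
      obtain ⟨x, hx0, hx1⟩ := hv
      set γ : ℝ≥0 := if v x < 1 then v x else (v x)⁻¹ with hγdef
      have hγ0 : γ ≠ 0 := by rw [hγdef]; split_ifs <;> simp [hx0]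
      have hγ1 : γ < 1 := by
        rw [hγdef]; split_ifs with hcase
        · exact hcase
        · exact inv_lt_one_of_one_lt₀ (lt_of_le_of_ne (not_lt.mp hcase) (Ne.symm hx1))
      set A := v (b' : k) * v (π : k) ^ ((negDeg l m n' : ℕ) : ℤ) with hA
      set B := v (b : k) * v (π : k) ^ ((negDeg l m n : ℕ) : ℤ) with hB
      have hA0 : A ≠ 0 := mul_ne_zero (v.ne_zero_iff.mpr hb'k) (zpow_ne_zero _ hPv)
      have hB0 : B ≠ 0 := mul_ne_zero (v.ne_zero_iff.mpr hbk) (zpow_ne_zero _ hPv)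
      have key : ∀ N : ℕ, A ≤ B * γ ^ N := by
        intro N
        have hγN0 : (γ ^ (N + 1) : ℝ≥0) ≠ 0 := pow_ne_zero _ hγ0
        set s : Fin l → ℝ≥0 := fun j' => if j' = j then γ ^ (N + 1) else 1 with hsdef
        have hprod : (∏ j' ∈ Finset.univ.filter (fun j' : Fin l => (j' : ℕ) < m), s j')
            = 1 := by
          rw [hsdef]
          rw [Finset.prod_ite_eq' (Finset.univ.filter (fun j' : Fin l => (j' : ℕ) < m)) j
            (fun _ => γ ^ (N + 1))]
          simp [Finset.mem_filter, Nat.not_lt.mpr hj]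
        have hsm2 : ∀ e : Fin l → ℤ, smon s e = (γ ^ (N + 1)) ^ (e j) := by
          intro e
          rw [hsdef, smon]
          rw [Finset.prod_congr rfl (fun j' _ =>
            show (if j' = j then γ ^ (N + 1) else 1) ^ (e j')
                = if j' = j then (γ ^ (N + 1)) ^ (e j') else 1 from by split_ifs <;> simp)]
          rw [Finset.prod_ite_eq' Finset.univ j (fun j' => (γ ^ (N + 1)) ^ (e j'))]
          simp
        have h5 := forward_ineq v l m π b b' n n' hn hn' h (s := s)
          (fun j' => by simp only [hsdef]; split_ifs <;> simp [hγ0])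
          (fun j' => by
            simp only [hsdef]; split_ifs
            · exact pow_le_one₀ zero_le hγ1.le
            · exact le_refl 1)
          (hprod ▸ hPv1)
        rw [hval, hval, hsm2, hsm2, ← hA, ← hB] at h5
        have hcan : ∀ (X Y z : ℝ≥0) (e f : ℤ), z ≠ 0 → X * z ^ e ≤ Y * z ^ f →
            X ≤ Y * z ^ (f - e) := by
          intro X Y z e f hz hxy
          have h := mul_le_mul_left hxy (z ^ (-e))
          rwa [mul_assoc, mul_assoc, ← zpow_add₀ hz, ← zpow_add₀ hz, add_neg_cancel,
            zpow_zero, mul_one, ← sub_eq_add_neg] at h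
        have h6 : A ≤ B * (γ ^ (N + 1)) ^ ((n j : ℤ) - n' j) :=
          hcan A B _ _ _ hγN0 h5
        have hd : (n j : ℤ) - n' j = (((n j - n' j).toNat : ℕ) : ℤ) :=
          (Int.toNat_of_nonneg (by omega)).symm
        rw [hd, zpow_natCast, ← pow_mul] at h6
        have hd1 : 1 ≤ (n j - n' j).toNat := by omega
        have hNle : N ≤ (N + 1) * (n j - n' j).toNat := by
          calc N ≤ (N + 1) * 1 := by omega
            _ ≤ (N + 1) * (n j - n' j).toNat := Nat.mul_le_mul_left _ hd1
        calc A ≤ B * γ ^ ((N + 1) * (n j - n' j).toNat) := h6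
          _ ≤ B * γ ^ N :=
            mul_le_mul_right (pow_le_pow_of_le_one zero_le hγ1.le hNle) _
      obtain ⟨N, hN⟩ := exists_pow_lt_of_lt_one
        (show (0 : ℝ≥0) < A / B from zero_lt_iff.mpr (div_ne_zero hA0 hB0)) hγ1
      have h7 : B * γ ^ N < A := by
        calc B * γ ^ N < B * (A / B) :=
              mul_lt_mul_of_pos_left hN (zero_lt_iff.mpr hB0)
          _ = A := by rw [mul_comm, div_mul_cancel₀ _ hB0]
      exact absurd (key N) (not_le.mpr h7)
  · rintro ⟨h1, h2, h3⟩
    rw [hsm, hsm]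
    exact backward v l m π b b' hb hπ n n' hn hn' h1 h2 h3

end Altered
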